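/- Let n, d, s be positive integers and let w^1,…,w^d ∈ ℕ^{n×n} be nonnegative integer weight matrices. Fix y ∈ ℕ^d such that y = w·x_σ for at least one permutation σ of {1,…,n}, and define g_y(a) := Σ { sign(σ) · Π_{i=1}^n a_{i,σ(i)} : σ a permutation with w·x_σ = y }. Then the number of assignments a : {1,…,n}×{1,…,n} → {1,2,…,s} with g_y(a) = 0 is at most n · s^{n²−1}; equivalently, if the a_{i,j} are independent and uniformly distributed on {1,…,s}, then the probability that g_y(a) = 0 is at most n/s. -/

import Mathlib

/-- Projection of the permutation matrix of σ under the weights: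
(w·x_σ)_k = Σ_i wᵏ_{i,σ(i)}. -/
def projPerm {n d : ℕ} (w : Fin d → Matrix (Fin n) (Fin n) ℕ)
    (σ : Equiv.Perm (Fin n)) : Fin d → ℕ :=
  fun k => ∑ i, w k i (σ i)

open Finset

lemma sz_key (m : ℕ) :
    ∀ {ι κ α : Type} [Fintype ι] [Fintype κ] [DecidableEq ι] [DecidableEq κ]
      (_ : Fintype.card ι = m) (s : ℕ) (S : Finset α) (_ : S.Nonempty)
      (f : α → (ι ↪ κ)) (_ : Set.InjOn f ↑S) (ε : α → ℤ) (_ : ∀ t ∈ S, ε t ≠ 0),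
    (Finset.univ.filter fun a : ι × κ → Fin s =>
        (∑ t ∈ S, ε t * ∏ i, ((a (i, f t i) : ℕ) + 1 : ℤ)) = 0).card
      ≤ m * s ^ (m * Fintype.card κ - 1) := by
  induction m with
  | zero =>
    intro ι κ α _ _ _ _ hm s S hS f hf ε hε
    have hempty : IsEmpty ι := Fintype.card_eq_zero_iff.mp hm
    obtain ⟨t₀, ht₀⟩ := hS
    have hsingle : ∀ t ∈ S, t = t₀ := by
      intro t ht
      apply hf ht ht₀
      ext i
      exact absurd trivial (hempty.false i).elim
    have hSeq : S = {t₀} := Finset.eq_singleton_iff_unique_mem.mpr ⟨ht₀, hsingle⟩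
    have : (Finset.univ.filter fun a : ι × κ → Fin s =>
        (∑ t ∈ S, ε t * ∏ i, ((a (i, f t i) : ℕ) + 1 : ℤ)) = 0) = ∅ := by
      rw [Finset.filter_eq_empty_iff]
      intro a _
      rw [hSeq, Finset.sum_singleton]
      have : (∏ i, ((a (i, f t₀ i) : ℕ) + 1 : ℤ)) = 1 := by
        rw [Finset.univ_eq_empty, Finset.prod_empty]
      rw [this, mul_one]
      exact hε t₀ ht₀
    rw [this]
    simp
  | succ m ih =>
    intro ι κ α _ _ _ _ hm s S hS f hf ε hε
    obtain ⟨i₀⟩ : Nonempty ι := Fintype.card_pos_iff.mp (by omega)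
    obtain ⟨t₀, ht₀⟩ := hS
    set j₀ := f t₀ i₀ with hj₀
    set k := Fintype.card κ with hk
    have hk1 : 1 ≤ k := Fintype.card_pos_iff.mpr ⟨j₀⟩
    have hι' : Fintype.card {i : ι // i ≠ i₀} = m := by
      rw [Fintype.card_subtype_compl, Fintype.card_subtype_eq, hm]
      omega
    set S' := S.filter (fun t => f t i₀ = j₀) with hS'def
    set f' : α → ({i : ι // i ≠ i₀} ↪ κ) :=
      fun t => ⟨fun i => f t i.1, (f t).injective.comp Subtype.val_injective⟩ with hf'def
    have hS' : S'.Nonempty := ⟨t₀, by simp [hS'def, ht₀, hj₀]⟩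
    have hSsub : ∀ t ∈ S', t ∈ S ∧ f t i₀ = j₀ := by
      intro t ht
      exact Finset.mem_filter.mp ht
    have hf' : Set.InjOn f' ↑S' := by
      intro t₁ h₁ t₂ h₂ h12
      have h₁' := hSsub t₁ h₁
      have h₂' := hSsub t₂ h₂
      apply hf h₁'.1 h₂'.1
      ext i
      by_cases hi : i = i₀
      · rw [hi, h₁'.2, h₂'.2]
      · exact DFunLike.congr_fun h12 ⟨i, hi⟩
    set res : (ι × κ → Fin s) → ({i : ι // i ≠ i₀} × κ → Fin s) :=
      fun a p => a (p.1.1, p.2) with hres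
    set c : ({i : ι // i ≠ i₀} × κ → Fin s) → ℤ :=
      fun b => ∑ t ∈ S', ε t * ∏ i, ((b (i, f' t i) : ℕ) + 1 : ℤ) with hc
    set g : (ι × κ → Fin s) → ℤ :=
      fun a => ∑ t ∈ S, ε t * ∏ i, ((a (i, f t i) : ℕ) + 1 : ℤ) with hg
    have hsplit : ∀ a : ι × κ → Fin s,
        g a = c (res a) * ((a (i₀, j₀) : ℕ) + 1 : ℤ)
            + ∑ t ∈ S.filter (fun t => ¬ f t i₀ = j₀),
                ε t * ∏ i, ((a (i, f t i) : ℕ) + 1 : ℤ) := by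
      intro a
      have hsum := Finset.sum_filter_add_sum_filter_not S (fun t => f t i₀ = j₀)
        (fun t => ε t * ∏ i, ((a (i, f t i) : ℕ) + 1 : ℤ))
      rw [hg]
      simp only at hsum ⊢
      rw [← hsum]
      congr 1
      rw [hc, Finset.sum_mul]
      apply Finset.sum_congr rfl
      intro t ht
      have htj : f t i₀ = j₀ := (Finset.mem_filter.mp ht).2
      have hprod : (∏ i : {i : ι // i ≠ i₀}, ((res a (i, f' t i) : ℕ) + 1 : ℤ))
          = ∏ i ∈ Finset.univ.erase i₀, ((a (i, f t i) : ℕ) + 1 : ℤ) := by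
        rw [Finset.prod_subtype (p := fun i => i ≠ i₀) (Finset.univ.erase i₀)
          (fun i => by simp [Finset.mem_erase]) (fun i => ((a (i, f t i) : ℕ) + 1 : ℤ))]
        rfl
      rw [mul_assoc, hprod, ← htj]
      rw [Finset.prod_erase_mul Finset.univ _ (Finset.mem_univ i₀)]
    set Z := Finset.univ.filter (fun a : ι × κ → Fin s => g a = 0) with hZ
    have hfib := Finset.card_eq_sum_card_fiberwise
      (f := res) (s := Z) (t := (Finset.univ : Finset ({i : ι // i ≠ i₀} × κ → Fin s)))
      (fun a _ => Finset.mem_univ _)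
    -- general fiber bound
    have hfibA : ∀ b, (Z.filter fun a => res a = b).card ≤ s ^ k := by
      intro b
      have hinj : Set.InjOn (fun (a : ι × κ → Fin s) => fun j : κ => a (i₀, j))
          ↑(Z.filter fun a => res a = b) := by
        intro a₁ h₁ a₂ h₂ h12
        have hb₁ := (Finset.mem_filter.mp (Finset.mem_coe.mp h₁)).2
        have hb₂ := (Finset.mem_filter.mp (Finset.mem_coe.mp h₂)).2
        funext p
        obtain ⟨i, j⟩ := p
        by_cases hi : i = i₀
        · rw [hi]; exact congrFun h12 j
        · have := congrFun (hb₁.trans hb₂.symm) (⟨i, hi⟩, j)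
          exact this
      have hle := Finset.card_le_card_of_injOn
        (t := (Finset.univ : Finset (κ → Fin s))) _ (fun a _ => Finset.mem_univ _) hinj
      refine hle.trans ?_
      rw [Finset.card_univ, Fintype.card_fun, Fintype.card_fin]
    -- improved fiber bound when c b ≠ 0
    have hfibB : ∀ b, c b ≠ 0 → (Z.filter fun a => res a = b).card ≤ s ^ (k - 1) := by
      intro b hcb
      have hinj : Set.InjOn (fun (a : ι × κ → Fin s) => fun j : {j : κ // j ≠ j₀} => a (i₀, j.1))
          ↑(Z.filter fun a => res a = b) := by
        intro a₁ h₁ a₂ h₂ h12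
        have hm₁ := Finset.mem_filter.mp (Finset.mem_coe.mp h₁)
        have hm₂ := Finset.mem_filter.mp (Finset.mem_coe.mp h₂)
        have hz₁ : g a₁ = 0 := (Finset.mem_filter.mp hm₁.1).2
        have hz₂ : g a₂ = 0 := (Finset.mem_filter.mp hm₂.1).2
        have hb₁ : res a₁ = b := hm₁.2
        have hb₂ : res a₂ = b := hm₂.2
        -- off-diagonal rows/entries coincide
        have hoff : ∀ i j, (i ≠ i₀ ∨ j ≠ j₀) → a₁ (i, j) = a₂ (i, j) := by
          intro i j hij
          by_cases hi : i = i₀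
          · have hj : j ≠ j₀ := by tauto
            rw [hi]
            exact congrFun h12 ⟨j, hj⟩
          · exact congrFun (hb₁.trans hb₂.symm) (⟨i, hi⟩, j)
        -- the residual sums agree
        have hrest : ∑ t ∈ S.filter (fun t => ¬ f t i₀ = j₀),
              ε t * ∏ i, ((a₁ (i, f t i) : ℕ) + 1 : ℤ)
            = ∑ t ∈ S.filter (fun t => ¬ f t i₀ = j₀),
              ε t * ∏ i, ((a₂ (i, f t i) : ℕ) + 1 : ℤ) := by
          apply Finset.sum_congr rfl
          intro t ht
          have htj : ¬ f t i₀ = j₀ := (Finset.mem_filter.mp ht).2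
          congr 1
          apply Finset.prod_congr rfl
          intro i _
          by_cases hi : i = i₀
          · rw [hoff (i) (f t i) (by rw [hi]; exact Or.inr htj)]
          · rw [hoff i (f t i) (Or.inl hi)]
        have he₁ := hsplit a₁
        have he₂ := hsplit a₂
        rw [hz₁] at he₁
        rw [hz₂] at he₂
        rw [hb₁] at he₁
        rw [hb₂] at he₂
        rw [hrest] at he₁
        have hmul : c b * ((a₁ (i₀, j₀) : ℕ) + 1 : ℤ)
            = c b * ((a₂ (i₀, j₀) : ℕ) + 1 : ℤ) := by linarith [he₁, he₂]
        have hval : ((a₁ (i₀, j₀) : ℕ) : ℤ) = ((a₂ (i₀, j₀) : ℕ) : ℤ) := by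
          have := mul_left_cancel₀ hcb hmul
          linarith
        have hval' : a₁ (i₀, j₀) = a₂ (i₀, j₀) := by
          apply Fin.ext
          exact_mod_cast hval
        funext p
        obtain ⟨i, j⟩ := p
        by_cases hi : i = i₀
        · by_cases hj : j = j₀
          · rw [hi, hj]; exact hval'
          · exact hoff i j (Or.inr hj)
        · exact hoff i j (Or.inl hi)
      have hle := Finset.card_le_card_of_injOn
        (t := (Finset.univ : Finset ({j : κ // j ≠ j₀} → Fin s))) _
        (fun a _ => Finset.mem_univ _) hinj
      refine hle.trans ?_
      rw [Finset.card_univ, Fintype.card_fun, Fintype.card_fin,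
        Fintype.card_subtype_compl, Fintype.card_subtype_eq]
    -- count of b with c b = 0, by induction hypothesis
    have hZc : (Finset.univ.filter fun b : {i : ι // i ≠ i₀} × κ → Fin s => c b = 0).card
        ≤ m * s ^ (m * k - 1) := by
      have := ih hι' s S' hS' f' hf' ε (fun t ht => hε t (hSsub t ht).1)
      rw [hk]
      convert this using 2
    -- put everything together
    have hbound : Z.card ≤ ∑ b : {i : ι // i ≠ i₀} × κ → Fin s,
        (if c b = 0 then s ^ k else s ^ (k - 1)) := by
      rw [hfib]
      apply Finset.sum_le_sum
      intro b _
      by_cases hcb : c b = 0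
      · rw [if_pos hcb]; exact hfibA b
      · rw [if_neg hcb]; exact hfibB b hcb
    have hcard2 : (Finset.univ.filter fun b : {i : ι // i ≠ i₀} × κ → Fin s => ¬ c b = 0).card
        ≤ s ^ (m * k) := by
      refine le_trans (Finset.card_filter_le _ _) ?_
      rw [Finset.card_univ, Fintype.card_fun, Fintype.card_fin, Fintype.card_prod, hι']
    have hsum2 : (∑ b : {i : ι // i ≠ i₀} × κ → Fin s,
          if c b = 0 then s ^ k else s ^ (k - 1))
        ≤ (Finset.univ.filter fun b : {i : ι // i ≠ i₀} × κ → Fin s => c b = 0).card * s ^ k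
          + s ^ (m * k) * s ^ (k - 1) := by
      rw [Finset.sum_ite, Finset.sum_const, Finset.sum_const, smul_eq_mul, smul_eq_mul]
      gcongr
    -- final arithmetic
    have hX : s ^ (m * k) * s ^ (k - 1) = s ^ ((m + 1) * k - 1) := by
      rw [← pow_add]
      congr 1
      rw [add_mul, one_mul]
      omega
    have hfirst : (Finset.univ.filter fun b : {i : ι // i ≠ i₀} × κ → Fin s => c b = 0).card
          * s ^ k ≤ m * s ^ ((m + 1) * k - 1) := by
      rcases Nat.eq_zero_or_pos m with hm0 | hm0
      · subst hm0
        have h0 : (Finset.univ.filter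
            fun b : {i : ι // i ≠ i₀} × κ → Fin s => c b = 0).card = 0 := by
          simpa using hZc
        simp [h0]
      · calc _ ≤ m * s ^ (m * k - 1) * s ^ k :=
              Nat.mul_le_mul_right _ hZc
          _ = m * s ^ ((m + 1) * k - 1) := by
              rw [mul_assoc, ← pow_add]
              congr 2
              have h1 : 1 ≤ m * k := Nat.one_le_iff_ne_zero.mpr
                (Nat.mul_ne_zero (by omega) (by omega))
              rw [add_mul, one_mul]
              omega
    calc Z.card ≤ _ := hbound
      _ ≤ _ := hsum2
      _ ≤ m * s ^ ((m + 1) * k - 1) + s ^ ((m + 1) * k - 1) := by rw [hX]; gcongr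
      _ = (m + 1) * s ^ ((m + 1) * k - 1) := by ring

theorem schwartz_zippel_for_gPoly (n d s : ℕ) (hn : 0 < n) (hd : 0 < d) (hs : 0 < s)
    (w : Fin d → Matrix (Fin n) (Fin n) ℕ) (y : Fin d → ℕ)
    (h : ∃ σ : Equiv.Perm (Fin n), projPerm w σ = y) :
    (Finset.univ.filter fun a : Fin n × Fin n → Fin s =>
        (∑ σ ∈ Finset.univ.filter (fun σ : Equiv.Perm (Fin n) => projPerm w σ = y),
          (Equiv.Perm.sign σ : ℤ) * ∏ i, ((a (i, σ i) : ℕ) + 1 : ℤ)) = 0).card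
      ≤ n * s ^ (n ^ 2 - 1) := by
  obtain ⟨σ₀, hσ₀⟩ := h
  have key := sz_key n (ι := Fin n) (κ := Fin n) (α := Equiv.Perm (Fin n))
    (by simp) s (Finset.univ.filter (fun σ : Equiv.Perm (Fin n) => projPerm w σ = y))
    ⟨σ₀, by simp [hσ₀]⟩
    (fun σ => σ.toEmbedding)
    (by
      intro σ₁ _ σ₂ _ h12
      ext x
      exact congrArg Fin.val (by simpa using DFunLike.congr_fun h12 x))
    (fun σ => (Equiv.Perm.sign σ : ℤ))
    (by
      intro σ _
      exact Units.ne_zero _)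
  simpa [Fintype.card_fin, ← sq] using key
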